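/- arXiv:1511.02681 — 4 statements merged into one kernel-verified Lean document; each statement's English description precedes it below -/
import Mathlib

section
/- Under the setting of the parametrized stress problem, the function φ : ℝ → ℝ ∪ {+∞} defined by φ(ζ) = I(σ(ζ)) for ζ ∈ D (where σ(ζ) is the unique minimizer of I(τ) = ½‖τ‖² over Λ_ζ ∩ P) and φ(ζ) = +∞ otherwise, is convex on ℝ: for ζ₀, ζ₁ ∈ D and λ ∈ [0,1], the convex combination (1−λ)σ(ζ₀) + λσ(ζ₁) lies in Λ_{(1−λ)ζ₀+λζ₁} ∩ P, hence φ((1−λ)ζ₀+λζ₁) ≤ (1−λ)φ(ζ₀) + λφ(ζ₁). -/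
/-- convexity of `φ`: the convex combination of minimizers is
admissible for the convex combination of load parameters, hence
`φ((1−λ)ζ₀+λζ₁) ≤ (1−λ)φ(ζ₀) + λφ(ζ₁)`. -/
theorem phi_convex
    {H V : Type*} [NormedAddCommGroup H] [InnerProductSpace ℝ H]
    [AddCommGroup V] [Module ℝ V]
    (P : Set H) (hPclosed : IsClosed P) (hPconv : Convex ℝ P) (hPne : P.Nonempty)
    (B : V →ₗ[ℝ] H) (L : V →ₗ[ℝ] ℝ)
    (Λ : ℝ → Set H)
    (hΛ : ∀ ζ, Λ ζ = {τ : H | ∀ v : V, (inner ℝ τ (B v) : ℝ) = ζ * L v})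
    (φ : ℝ → ℝ)
    (hφ : ∀ ζ, φ ζ = sInf ((fun τ : H => (1 / 2 : ℝ) * ‖τ‖ ^ 2) '' (Λ ζ ∩ P)))
    (ζ₀ ζ₁ : ℝ) (hζ₀ : 0 ≤ ζ₀) (hζ₁ : 0 ≤ ζ₁)
    (σ₀ σ₁ : H) (hσ₀ : σ₀ ∈ Λ ζ₀ ∩ P) (hσ₁ : σ₁ ∈ Λ ζ₁ ∩ P)
    (hσ₀min : ∀ τ ∈ Λ ζ₀ ∩ P, (1 / 2 : ℝ) * ‖σ₀‖ ^ 2 ≤ (1 / 2 : ℝ) * ‖τ‖ ^ 2)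
    (hσ₁min : ∀ τ ∈ Λ ζ₁ ∩ P, (1 / 2 : ℝ) * ‖σ₁‖ ^ 2 ≤ (1 / 2 : ℝ) * ‖τ‖ ^ 2)
    (lam : ℝ) (hlam0 : 0 ≤ lam) (hlam1 : lam ≤ 1) :
    (1 - lam) • σ₀ + lam • σ₁ ∈ Λ ((1 - lam) * ζ₀ + lam * ζ₁) ∩ P ∧
      φ ((1 - lam) * ζ₀ + lam * ζ₁) ≤ (1 - lam) * φ ζ₀ + lam * φ ζ₁ := by

  have hmem : (1 - lam) • σ₀ + lam • σ₁ ∈ Λ ((1 - lam) * ζ₀ + lam * ζ₁) ∩ P := by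
    constructor
    · rw [hΛ]
      intro v
      have h0 := (hΛ ζ₀ ▸ hσ₀.1) v
      have h1 := (hΛ ζ₁ ▸ hσ₁.1) v
      simp only [Set.mem_setOf_eq, inner_add_left, real_inner_smul_left]
      rw [h0, h1]; ring
    · exact hPconv hσ₀.2 hσ₁.2 (by linarith) hlam0 (by ring)
  refine ⟨hmem, ?_⟩
  have hbdd : ∀ ζ, BddBelow ((fun τ : H => (1 / 2 : ℝ) * ‖τ‖ ^ 2) '' (Λ ζ ∩ P)) := by
    intro ζ
    refine ⟨0, ?_⟩
    rintro x ⟨τ, -, rfl⟩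
    positivity
  have hφ0 : φ ζ₀ = (1 / 2 : ℝ) * ‖σ₀‖ ^ 2 := by
    rw [hφ]
    apply le_antisymm
    · exact csInf_le (hbdd ζ₀) ⟨σ₀, hσ₀, rfl⟩
    · apply le_csInf (Set.Nonempty.image _ ⟨σ₀, hσ₀⟩)
      rintro x ⟨τ, hτ, rfl⟩
      exact hσ₀min τ hτ
  have hφ1 : φ ζ₁ = (1 / 2 : ℝ) * ‖σ₁‖ ^ 2 := by
    rw [hφ]
    apply le_antisymm
    · exact csInf_le (hbdd ζ₁) ⟨σ₁, hσ₁, rfl⟩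
    · apply le_csInf (Set.Nonempty.image _ ⟨σ₁, hσ₁⟩)
      rintro x ⟨τ, hτ, rfl⟩
      exact hσ₁min τ hτ
  have hle : φ ((1 - lam) * ζ₀ + lam * ζ₁)
      ≤ (1 / 2 : ℝ) * ‖(1 - lam) • σ₀ + lam • σ₁‖ ^ 2 := by
    rw [hφ]
    exact csInf_le (hbdd _) ⟨_, hmem, rfl⟩
  have hnorm : ‖(1 - lam) • σ₀ + lam • σ₁‖ ≤ (1 - lam) * ‖σ₀‖ + lam * ‖σ₁‖ := by
    calc ‖(1 - lam) • σ₀ + lam • σ₁‖ ≤ ‖(1 - lam) • σ₀‖ + ‖lam • σ₁‖ := norm_add_le _ _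
    _ = (1 - lam) * ‖σ₀‖ + lam * ‖σ₁‖ := by
        rw [norm_smul, norm_smul, Real.norm_eq_abs, Real.norm_eq_abs,
          abs_of_nonneg (by linarith), abs_of_nonneg hlam0]
  have h0 := norm_nonneg σ₀
  have h1 := norm_nonneg σ₁
  have hc := norm_nonneg ((1 - lam) • σ₀ + lam • σ₁)
  rw [hφ0, hφ1]
  nlinarith [sq_nonneg (‖σ₀‖ - ‖σ₁‖), mul_nonneg hlam0 (sub_nonneg.2 hlam1)]
end

section
/- Under the assumptions (L1)–(L3) of the deformation plasticity problem, the function φ is strictly convex on D: if ζ₀ ≠ ζ₁ are both in D and λ ∈ (0,1), then φ((1−λ)ζ₀+λζ₁) < (1−λ)φ(ζ₀)+λφ(ζ₁). The key point is that σ(ζ₀) ≠ σ(ζ₁) (since L ≠ 0 implies distinct loading parameters give distinct minimizers) and strict convexity of the squared norm. -/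
/-- strict convexity of `φ` on `D`: for distinct admissible load
parameters the minimizers differ (since `L ≠ 0`), and strict convexity of the
squared norm gives a strict inequality. -/
theorem phi_strictly_convex
    {H V : Type*} [NormedAddCommGroup H] [InnerProductSpace ℝ H]
    [AddCommGroup V] [Module ℝ V]
    (P : Set H) (hPclosed : IsClosed P) (hPconv : Convex ℝ P)
    (B : V →ₗ[ℝ] H) (L : V →ₗ[ℝ] ℝ) (hL : L ≠ 0)
    (Λ : ℝ → Set H)
    (hΛ : ∀ ζ, Λ ζ = {τ : H | ∀ v : V, (inner ℝ τ (B v) : ℝ) = ζ * L v})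
    (φ : ℝ → ℝ)
    (hφ : ∀ ζ, φ ζ = sInf ((fun τ : H => (1 / 2 : ℝ) * ‖τ‖ ^ 2) '' (Λ ζ ∩ P)))
    (ζ₀ ζ₁ : ℝ) (hζ₀ : 0 ≤ ζ₀) (hζ₁ : 0 ≤ ζ₁) (hne : ζ₀ ≠ ζ₁)
    (σ₀ σ₁ : H) (hσ₀ : σ₀ ∈ Λ ζ₀ ∩ P) (hσ₁ : σ₁ ∈ Λ ζ₁ ∩ P)
    (hσ₀min : ∀ τ ∈ Λ ζ₀ ∩ P, (1 / 2 : ℝ) * ‖σ₀‖ ^ 2 ≤ (1 / 2 : ℝ) * ‖τ‖ ^ 2)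
    (hσ₁min : ∀ τ ∈ Λ ζ₁ ∩ P, (1 / 2 : ℝ) * ‖σ₁‖ ^ 2 ≤ (1 / 2 : ℝ) * ‖τ‖ ^ 2)
    (lam : ℝ) (hlam0 : 0 < lam) (hlam1 : lam < 1) :
    φ ((1 - lam) * ζ₀ + lam * ζ₁) < (1 - lam) * φ ζ₀ + lam * φ ζ₁ := by
  -- φ ζ₀ and φ ζ₁ are attained
  have hφ0 : φ ζ₀ = (1 / 2 : ℝ) * ‖σ₀‖ ^ 2 := by
    rw [hφ]
    apply le_antisymm
    · exact csInf_le ⟨0, by rintro x ⟨τ, hτ, rfl⟩; positivity⟩ ⟨σ₀, hσ₀, rfl⟩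
    · apply le_csInf (Set.Nonempty.image _ ⟨σ₀, hσ₀⟩)
      rintro x ⟨τ, hτ, rfl⟩
      exact hσ₀min τ hτ
  have hφ1 : φ ζ₁ = (1 / 2 : ℝ) * ‖σ₁‖ ^ 2 := by
    rw [hφ]
    apply le_antisymm
    · exact csInf_le ⟨0, by rintro x ⟨τ, hτ, rfl⟩; positivity⟩ ⟨σ₁, hσ₁, rfl⟩
    · apply le_csInf (Set.Nonempty.image _ ⟨σ₁, hσ₁⟩)
      rintro x ⟨τ, hτ, rfl⟩
      exact hσ₁min τ hτ
  -- the convex combination of minimizers is admissible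
  set σl : H := (1 - lam) • σ₀ + lam • σ₁ with hσl
  have hσlmem : σl ∈ Λ ((1 - lam) * ζ₀ + lam * ζ₁) ∩ P := by
    constructor
    · rw [hΛ]
      intro v
      have h0 : (inner ℝ σ₀ (B v) : ℝ) = ζ₀ * L v := by
        have := hσ₀.1; rw [hΛ] at this; exact this v
      have h1 : (inner ℝ σ₁ (B v) : ℝ) = ζ₁ * L v := by
        have := hσ₁.1; rw [hΛ] at this; exact this v
      simp only [hσl, inner_add_left, real_inner_smul_left, h0, h1]
      ring
    · exact hPconv hσ₀.2 hσ₁.2 (by linarith) (le_of_lt hlam0) (by ring)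
  -- σ₀ ≠ σ₁ since L ≠ 0
  have hσne : σ₀ ≠ σ₁ := by
    intro h
    obtain ⟨v, hv⟩ : ∃ v, L v ≠ 0 := by
      by_contra hc
      push_neg at hc
      exact hL (by ext v; exact hc v)
    have h0 : (inner ℝ σ₀ (B v) : ℝ) = ζ₀ * L v := by
      have := hσ₀.1; rw [hΛ] at this; exact this v
    have h1 : (inner ℝ σ₁ (B v) : ℝ) = ζ₁ * L v := by
      have := hσ₁.1; rw [hΛ] at this; exact this v
    rw [h] at h0
    exact hne (mul_right_cancel₀ hv (h0.symm.trans h1))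
  -- strict convexity of the squared norm
  have hdiff : (0 : ℝ) < ‖σ₀ - σ₁‖ ^ 2 := by
    exact pow_pos (norm_sub_pos_iff.mpr hσne) 2
  have hinner : (inner ℝ σ₀ σ₁ : ℝ) < ((‖σ₀‖ ^ 2 + ‖σ₁‖ ^ 2) / 2) := by
    have h := norm_sub_sq_real σ₀ σ₁
    nlinarith
  have hnormsq : ‖σl‖ ^ 2 < (1 - lam) * ‖σ₀‖ ^ 2 + lam * ‖σ₁‖ ^ 2 := by
    have hexp : ‖σl‖ ^ 2 = (1 - lam) ^ 2 * ‖σ₀‖ ^ 2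
        + 2 * ((1 - lam) * lam) * (inner ℝ σ₀ σ₁ : ℝ) + lam ^ 2 * ‖σ₁‖ ^ 2 := by
      rw [hσl, norm_add_sq_real, real_inner_smul_left, real_inner_smul_right,
        norm_smul, norm_smul]
      rw [Real.norm_eq_abs, Real.norm_eq_abs, abs_of_pos (by linarith : (0:ℝ) < 1 - lam),
        abs_of_pos hlam0]
      ring
    nlinarith [mul_pos (sub_pos.mpr hlam1) hlam0]
  -- conclude
  have hle : φ ((1 - lam) * ζ₀ + lam * ζ₁) ≤ (1 / 2 : ℝ) * ‖σl‖ ^ 2 := by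
    rw [hφ]
    exact csInf_le ⟨0, by rintro x ⟨τ, hτ, rfl⟩; positivity⟩ ⟨σl, hσlmem, rfl⟩
  rw [hφ0, hφ1]
  nlinarith
end

section
/- Suppose ζ_lim := sup D < +∞ and ζ_lim ∉ D (i.e., Λ_{ζ_lim} ∩ P = ∅). Then φ(ζ) → +∞ as ζ → ζ_lim from the left. (If instead φ were bounded along a sequence ζ_j → ζ_lim⁻, the minimizers σ(ζ_j) would be bounded in H, a weak limit σ̄ would belong to Λ_{ζ_lim} ∩ P by weak closedness, contradicting emptiness.) -/
/-- if the limit load `ζ_lim = sup D` is finite and not attained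
(`Λ_{ζ_lim} ∩ P = ∅`), then the minimal complementary energy `φ` blows up:
`φ(ζ) → +∞` as `ζ → ζ_lim⁻`. -/
theorem phi_blows_up_at_limit_load
    {H V : Type*} [NormedAddCommGroup H] [InnerProductSpace ℝ H] [CompleteSpace H]
    [AddCommGroup V] [Module ℝ V]
    (P : Set H) (hPclosed : IsClosed P) (hPconv : Convex ℝ P)
    (B : V →ₗ[ℝ] H) (L : V →ₗ[ℝ] ℝ)
    (Λ : ℝ → Set H)
    (hΛ : ∀ ζ, Λ ζ = {τ : H | ∀ v : V, (inner ℝ τ (B v) : ℝ) = ζ * L v})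
    (φ : ℝ → ℝ)
    (hφ : ∀ ζ, φ ζ = sInf ((fun τ : H => (1 / 2 : ℝ) * ‖τ‖ ^ 2) '' (Λ ζ ∩ P)))
    (ζlim : ℝ) (hζlim : 0 < ζlim)
    (hD : {ζ : ℝ | 0 ≤ ζ ∧ (Λ ζ ∩ P).Nonempty} = Set.Ico 0 ζlim)
    (hempty : Λ ζlim ∩ P = ∅) :
    Filter.Tendsto φ (nhdsWithin ζlim (Set.Iio ζlim)) Filter.atTop := by
  have hbdd : ∀ ζ, BddBelow ((fun τ : H => (1 / 2 : ℝ) * ‖τ‖ ^ 2) '' (Λ ζ ∩ P)) := by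
    intro ζ
    refine ⟨0, ?_⟩
    rintro x ⟨τ, -, rfl⟩
    positivity
  have hφ0 : ∀ ζ, 0 ≤ φ ζ := by
    intro ζ
    rw [hφ]
    apply Real.sInf_nonneg
    rintro x ⟨τ, -, rfl⟩
    positivity
  rw [Filter.tendsto_atTop]
  intro M
  by_contra hM
  rw [Filter.not_eventually] at hM
  -- hM : ∃ᶠ ζ in 𝓝[<] ζlim, ¬ M ≤ φ ζ
  set F := nhdsWithin ζlim (Set.Iio ζlim) with hF
  set S : Set ℝ := {y | ∀ᶠ ζ in F, y ≤ φ ζ} with hSdef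
  have hS0 : (0 : ℝ) ∈ S := by
    simp only [hSdef, Set.mem_setOf_eq]
    exact Filter.Eventually.of_forall fun ζ => hφ0 ζ
  have hSbdd : BddAbove S := by
    refine ⟨M, fun y hy => ?_⟩
    simp only [hSdef, Set.mem_setOf_eq] at hy
    obtain ⟨ζ, h1, h2⟩ := (hM.and_eventually hy).exists
    have := not_le.1 h1
    linarith
  set L' := sSup S with hL'
  have hLlb : ∀ ε > (0 : ℝ), ∀ᶠ ζ in F, L' - ε < φ ζ := by
    intro ε hε
    obtain ⟨y, hyS, hy⟩ := exists_lt_of_lt_csSup ⟨0, hS0⟩ (by linarith : L' - ε < L')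
    simp only [hSdef, Set.mem_setOf_eq] at hyS
    exact hyS.mono fun ζ h => lt_of_lt_of_le hy h
  have hLub : ∀ ε > (0 : ℝ), ∃ᶠ ζ in F, φ ζ < L' + ε := by
    intro ε hε
    by_contra h
    rw [Filter.not_frequently] at h
    have hmem : L' + ε ∈ S := by
      simp only [hSdef, Set.mem_setOf_eq]
      exact h.mono fun ζ hz => not_lt.1 hz
    have := le_csSup hSbdd hmem
    linarith
  -- lower-bound windows
  have hwin : ∀ ε > (0 : ℝ), ∃ l, 0 ≤ l ∧ l < ζlim ∧
      ∀ ζ ∈ Set.Ioo l ζlim, L' - ε < φ ζ := by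
    intro ε hε
    have h := hLlb ε hε
    rw [hF] at h
    obtain ⟨l, hl, hsub⟩ := mem_nhdsLT_iff_exists_Ioo_subset.1 h
    refine ⟨max l 0, le_max_right _ _, max_lt hl hζlim, ?_⟩
    intro ζ hζ
    exact hsub ⟨lt_of_le_of_lt (le_max_left l 0) hζ.1, hζ.2⟩
  -- frequently small values in any window
  have hfreq : ∀ ε > (0 : ℝ), ∀ l < ζlim, ∃ ζ ∈ Set.Ioo l ζlim, φ ζ < L' + ε := by
    intro ε hε l hl
    exact Filter.frequently_iff.1 (hLub ε hε)
      (Ioo_mem_nhdsLT_of_mem ⟨hl, le_refl _⟩)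
  -- existence of near minimizers
  have hτex : ∀ ζ ∈ Set.Ico 0 ζlim, ∀ c : ℝ, φ ζ < c →
      ∃ τ ∈ Λ ζ ∩ P, (1 / 2 : ℝ) * ‖τ‖ ^ 2 < c := by
    intro ζ hζ c hc
    have hne : (Λ ζ ∩ P).Nonempty := by
      have hmem : ζ ∈ {ζ : ℝ | 0 ≤ ζ ∧ (Λ ζ ∩ P).Nonempty} := by rw [hD]; exact hζ
      exact hmem.2
    rw [hφ] at hc
    obtain ⟨x, hx, hxc⟩ := (csInf_lt_iff (hbdd ζ) (hne.image _)).1 hc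
    obtain ⟨τ, hτ, rfl⟩ := hx
    exact ⟨τ, hτ, hxc⟩
  -- key midpoint / parallelogram estimate
  have key : ∀ ε > (0 : ℝ), ∀ l : ℝ, l < ζlim →
      (∀ ζ ∈ Set.Ioo l ζlim, L' - ε < φ ζ) →
      ∀ ζ₁ ζ₂ : ℝ, ζ₁ ∈ Set.Ioo l ζlim → ζ₂ ∈ Set.Ioo l ζlim →
      ∀ τ₁ ∈ Λ ζ₁ ∩ P, ∀ τ₂ ∈ Λ ζ₂ ∩ P,
      (1 / 2 : ℝ) * ‖τ₁‖ ^ 2 < L' + ε → (1 / 2 : ℝ) * ‖τ₂‖ ^ 2 < L' + ε →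
      ‖τ₁ - τ₂‖ ^ 2 < 16 * ε := by
    intro ε hε l hl hlow ζ₁ ζ₂ h1 h2 τ₁ hτ1 τ₂ hτ2 hv1 hv2
    set m := (ζ₁ + ζ₂) / 2 with hm
    have hmIoo : m ∈ Set.Ioo l ζlim := by
      constructor
      · have := h1.1; have := h2.1; rw [hm]; linarith
      · have := h1.2; have := h2.2; rw [hm]; linarith
    set σ := (1 / 2 : ℝ) • τ₁ + (1 / 2 : ℝ) • τ₂ with hσ
    have hσΛ : σ ∈ Λ m := by
      rw [hΛ]
      intro v
      have e1 : (inner ℝ τ₁ (B v) : ℝ) = ζ₁ * L v := by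
        have := hτ1.1; rw [hΛ] at this; exact this v
      have e2 : (inner ℝ τ₂ (B v) : ℝ) = ζ₂ * L v := by
        have := hτ2.1; rw [hΛ] at this; exact this v
      show (inner ℝ σ (B v) : ℝ) = m * L v
      rw [hσ, inner_add_left, real_inner_smul_left, real_inner_smul_left, e1, e2, hm]
      ring
    have hσP : σ ∈ P :=
      hPconv hτ1.2 hτ2.2 (by norm_num) (by norm_num) (by norm_num)
    have hφm : φ m ≤ (1 / 2 : ℝ) * ‖σ‖ ^ 2 := by
      rw [hφ]
      exact csInf_le (hbdd m) ⟨σ, ⟨hσΛ, hσP⟩, rfl⟩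
    have hlow' := hlow m hmIoo
    have hpar := parallelogram_law_with_norm ℝ τ₁ τ₂
    have hσnorm : ‖σ‖ ^ 2 = (1 / 4 : ℝ) * ‖τ₁ + τ₂‖ ^ 2 := by
      have hrw : σ = (1 / 2 : ℝ) • (τ₁ + τ₂) := by rw [hσ, smul_add]
      rw [hrw, norm_smul]
      simp [Real.norm_eq_abs]
      ring
    nlinarith [norm_nonneg (τ₁ - τ₂), norm_nonneg (τ₁ + τ₂), sq_nonneg (‖τ₁ - τ₂‖)]
  -- choose window endpoints for ε = (1/4)^n
  have hwin' : ∀ n : ℕ, ∃ l, 0 ≤ l ∧ l < ζlim ∧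
      ∀ ζ ∈ Set.Ioo l ζlim, L' - (1 / 4 : ℝ) ^ n < φ ζ :=
    fun n => hwin _ (by positivity)
  choose lb hlb0 hlblt hlbprop using hwin'
  -- cumulative endpoints
  set θ : ℕ → ℝ := fun n =>
    max (ζlim - 1 / (n + 1)) ((Finset.range (n + 1)).sup' Finset.nonempty_range_add_one lb)
    with hθ
  have hθlt : ∀ n, θ n < ζlim := by
    intro n
    rw [hθ]
    apply max_lt
    · have : (0 : ℝ) < 1 / (n + 1) := by positivity
      linarith
    · rw [Finset.sup'_lt_iff]
      intro i _
      exact hlblt i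
  have hθge : ∀ n i : ℕ, i ≤ n → lb i ≤ θ n := by
    intro n i hi
    rw [hθ]
    refine le_trans ?_ (le_max_right _ _)
    exact Finset.le_sup' lb (Finset.mem_range.2 (Nat.lt_succ_of_le hi))
  have hθge0 : ∀ n, 0 ≤ θ n := fun n => le_trans (hlb0 n) (hθge n n le_rfl)
  have hθlow : ∀ n : ℕ, ζlim - 1 / (n + 1) ≤ θ n := fun n => le_max_left _ _
  -- pick the sequence
  have hpick : ∀ n : ℕ, ∃ ζ, ζ ∈ Set.Ioo (θ n) ζlim ∧
      ∃ τ ∈ Λ ζ ∩ P, (1 / 2 : ℝ) * ‖τ‖ ^ 2 < L' + (1 / 4 : ℝ) ^ n := by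
    intro n
    obtain ⟨ζ, hζ, hφζ⟩ := hfreq ((1 / 4 : ℝ) ^ n) (by positivity) (θ n) (hθlt n)
    obtain ⟨τ, hτ, hval⟩ :=
      hτex ζ ⟨le_trans (hθge0 n) (le_of_lt hζ.1), hζ.2⟩ _ hφζ
    exact ⟨ζ, hζ, τ, hτ, hval⟩
  choose ζs hζs τs hτs hval using hpick
  have hζwin : ∀ N j : ℕ, N ≤ j → ζs j ∈ Set.Ioo (lb N) ζlim :=
    fun N j hNj => ⟨lt_of_le_of_lt (hθge j N hNj) (hζs j).1, (hζs j).2⟩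
  have hvalN : ∀ N j : ℕ, N ≤ j →
      (1 / 2 : ℝ) * ‖τs j‖ ^ 2 < L' + (1 / 4 : ℝ) ^ N := by
    intro N j hNj
    refine lt_of_lt_of_le (hval j) ?_
    have : ((1 : ℝ) / 4) ^ j ≤ (1 / 4 : ℝ) ^ N :=
      pow_le_pow_of_le_one (by norm_num) (by norm_num) hNj
    linarith
  -- Cauchy
  have hsq : ∀ N j k : ℕ, N ≤ j → N ≤ k →
      ‖τs j - τs k‖ ^ 2 < 16 * (1 / 4 : ℝ) ^ N := by
    intro N j k hj hk
    exact key _ (by positivity) (lb N) (hlblt N) (hlbprop N) (ζs j) (ζs k)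
      (hζwin N j hj) (hζwin N k hk) (τs j) (hτs j) (τs k) (hτs k)
      (hvalN N j hj) (hvalN N k hk)
  have hcau : CauchySeq τs := by
    rw [Metric.cauchySeq_iff]
    intro ε hε
    have htend : Filter.Tendsto (fun n : ℕ => 16 * (1 / 4 : ℝ) ^ n)
        Filter.atTop (nhds 0) := by
      have := tendsto_pow_atTop_nhds_zero_of_lt_one
        (by norm_num : (0:ℝ) ≤ 1/4) (by norm_num : (1/4:ℝ) < 1)
      simpa using this.const_mul (16 : ℝ)
    obtain ⟨N, hN⟩ := (htend.eventually (gt_mem_nhds (by positivity : (0:ℝ) < ε ^ 2))).exists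
    refine ⟨N, fun j hj k hk => ?_⟩
    have h2 := hsq N j k hj hk
    rw [dist_eq_norm]
    nlinarith [norm_nonneg (τs j - τs k)]
  obtain ⟨σ, hσ⟩ := cauchySeq_tendsto_of_complete hcau
  have hσP : σ ∈ P :=
    hPclosed.mem_of_tendsto hσ (Filter.Eventually.of_forall fun n => (hτs n).2)
  have hζtend : Filter.Tendsto ζs Filter.atTop (nhds ζlim) := by
    have hlo : Filter.Tendsto (fun n : ℕ => ζlim - 1 / (n + 1))
        Filter.atTop (nhds ζlim) := by
      have := tendsto_one_div_add_atTop_nhds_zero_nat (𝕜 := ℝ)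
      simpa using (tendsto_const_nhds (x := ζlim) (f := Filter.atTop)).sub this
    refine tendsto_of_tendsto_of_tendsto_of_le_of_le hlo tendsto_const_nhds ?_ ?_
    · intro n
      exact le_of_lt (lt_of_le_of_lt (hθlow n) (hζs n).1)
    · intro n
      exact le_of_lt (hζs n).2
  have hσΛ : σ ∈ Λ ζlim := by
    rw [hΛ]
    intro v
    have h1 : Filter.Tendsto (fun n => (inner ℝ (τs n) (B v) : ℝ))
        Filter.atTop (nhds (inner ℝ σ (B v))) :=
      hσ.inner tendsto_const_nhds
    have h2 : ∀ n, (inner ℝ (τs n) (B v) : ℝ) = ζs n * L v := by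
      intro n
      have := (hτs n).1; rw [hΛ] at this; exact this v
    have h3 : Filter.Tendsto (fun n => ζs n * L v)
        Filter.atTop (nhds (ζlim * L v)) := hζtend.mul_const _
    have h1' : Filter.Tendsto (fun n => ζs n * L v)
        Filter.atTop (nhds (inner ℝ σ (B v) : ℝ)) := by
      refine h1.congr fun n => h2 n
    exact tendsto_nhds_unique h1' h3
  have : σ ∈ Λ ζlim ∩ P := ⟨hσΛ, hσP⟩
  rw [hempty] at this
  exact this
end

section
/- For α ≥ 0, the problem (P*)^α of minimizing J_α(τ) := I(τ) − α ω(τ) over Λ̃_L ∩ P has a unique solution σ; this σ satisfies ψ(α) = ω(σ), and σ is also the solution of the constrained problem (P*)_ζ with ζ = ω(σ) (i.e., σ minimizes I over Λ_{ζL} ∩ P). -/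
open scoped InnerProductSpace

section Aux
variable {H : Type*} [NormedAddCommGroup H] [InnerProductSpace ℝ H] [CompleteSpace H]

lemma my_proj_exists (K : Set H) (hne : K.Nonempty) (hcl : IsClosed K) (hcv : Convex ℝ K)
    (u : H) : ∃ v ∈ K, ∀ x ∈ K, ‖u - v‖ ≤ ‖u - x‖ := by
  obtain ⟨v, hv, heq⟩ := exists_norm_eq_iInf_of_complete_convex hne hcl.isComplete hcv u
  refine ⟨v, hv, fun x hx => ?_⟩
  rw [heq]
  exact ciInf_le ⟨0, Set.forall_mem_range.2 fun _ => norm_nonneg _⟩ (⟨x, hx⟩ : K)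

omit [CompleteSpace H] in
lemma my_proj_unique {K : Set H} (hcv : Convex ℝ K) {u v₁ v₂ : H}
    (h₁ : v₁ ∈ K) (h₂ : v₂ ∈ K)
    (hm₁ : ∀ x ∈ K, ‖u - v₁‖ ≤ ‖u - x‖) (hm₂ : ∀ x ∈ K, ‖u - v₂‖ ≤ ‖u - x‖) :
    v₁ = v₂ := by
  have hmid : (1/2 : ℝ) • v₁ + (1/2 : ℝ) • v₂ ∈ K :=
    hcv h₁ h₂ (by norm_num) (by norm_num) (by norm_num)
  have h12 := hm₁ _ hmid
  have hpar := parallelogram_law_with_norm ℝ (u - v₁) (u - v₂)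
  have he1 : u - ((1/2 : ℝ) • v₁ + (1/2 : ℝ) • v₂) =
      (1/2 : ℝ) • ((u - v₁) + (u - v₂)) := by
    rw [smul_add]; module
  have he2 : ‖u - ((1/2:ℝ) • v₁ + (1/2:ℝ) • v₂)‖ = (1/2) * ‖(u - v₁) + (u - v₂)‖ := by
    rw [he1, norm_smul]; simp
  have he3 : (u - v₁) - (u - v₂) = v₂ - v₁ := by abel
  rw [he3] at hpar
  have h1 : ‖u - v₁‖ ≤ ‖u - v₂‖ := hm₁ _ h₂
  have h2 : ‖u - v₂‖ ≤ ‖u - v₁‖ := hm₂ _ h₁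
  have heqn : ‖u - v₁‖ = ‖u - v₂‖ := le_antisymm h1 h2
  rw [he2] at h12
  have hz : ‖v₂ - v₁‖ * ‖v₂ - v₁‖ ≤ 0 := by
    nlinarith [norm_nonneg (v₂ - v₁), norm_nonneg (u - v₁), norm_nonneg ((u - v₁) + (u - v₂))]
  have : v₂ - v₁ = 0 := by
    by_contra hne
    have := norm_pos_iff.2 hne
    nlinarith
  exact (sub_eq_zero.1 this).symm

omit [CompleteSpace H] in
lemma my_quad_id (u τ : H) :
    (1/2 : ℝ) * ‖τ‖ ^ 2 - ⟪τ, u⟫_ℝ = (1/2 : ℝ) * ‖τ - u‖ ^ 2 - (1/2 : ℝ) * ‖u‖ ^ 2 := by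
  rw [norm_sub_sq_real]; ring

end Aux

/-- for `α ≥ 0`, the problem `(P*)^α` of minimizing
`J_α(τ) = ½‖τ‖² − α ω(τ)` over the closed convex nonempty set `Λ̃_L ∩ P` has a
unique solution `σ`; moreover `ψ(α) = ω(σ)` and `σ` minimizes `½‖τ‖²` over
`Λ_{ω(σ)L} ∩ P` (i.e. solves `(P*)_ζ` with `ζ = ω(σ)`). -/
theorem biased_problem_unique_solution
    {H V : Type*} [NormedAddCommGroup H] [InnerProductSpace ℝ H] [CompleteSpace H]
    [AddCommGroup V] [Module ℝ V]
    (P : Set H) (hPclosed : IsClosed P) (hPconv : Convex ℝ P) (hP0 : (0 : H) ∈ P)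
    (B : V →ₗ[ℝ] H) (L : V →ₗ[ℝ] ℝ) (hL : L ≠ 0)
    (Λ : ℝ → Set H)
    (hΛ : ∀ ζ, Λ ζ = {τ : H | ∀ v : V, (inner ℝ τ (B v) : ℝ) = ζ * L v})
    (Λt : Set H) (hΛt : Λt = ⋃ ζ ∈ Set.Ici (0 : ℝ), Λ ζ)
    (ω : H → ℝ) (hω : ∀ τ ∈ Λt, 0 ≤ ω τ ∧ τ ∈ Λ (ω τ))
    (hωaff : ∀ τ₁ ∈ Λt, ∀ τ₂ ∈ Λt, ∀ lam : ℝ, 0 ≤ lam → lam ≤ 1 →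
      ω (lam • τ₁ + (1 - lam) • τ₂) = lam * ω τ₁ + (1 - lam) * ω τ₂)
    (c : ℝ) (hωbound : ∀ τ ∈ Λt, ω τ ≤ c * ‖τ‖)
    (D : Set ℝ) (hD : D = {ζ : ℝ | 0 ≤ ζ ∧ (Λ ζ ∩ P).Nonempty})
    (φ : ℝ → ℝ)
    (hφ : ∀ ζ, φ ζ = sInf ((fun τ : H => (1 / 2 : ℝ) * ‖τ‖ ^ 2) '' (Λ ζ ∩ P)))
    (ψ : ℝ → ℝ)
    (hψ : ∀ α : ℝ, 0 ≤ α → ψ α ∈ D ∧ ∀ t ∈ D, φ (ψ α) - α * ψ α ≤ φ t - α * t)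
    (α : ℝ) (hα : 0 ≤ α) :
    (∃! σ : H, σ ∈ Λt ∩ P ∧
        ∀ τ ∈ Λt ∩ P,
          (1 / 2 : ℝ) * ‖σ‖ ^ 2 - α * ω σ ≤ (1 / 2 : ℝ) * ‖τ‖ ^ 2 - α * ω τ) ∧
      (∀ σ ∈ Λt ∩ P,
        (∀ τ ∈ Λt ∩ P,
            (1 / 2 : ℝ) * ‖σ‖ ^ 2 - α * ω σ ≤ (1 / 2 : ℝ) * ‖τ‖ ^ 2 - α * ω τ) →
          ψ α = ω σ ∧
            ∀ τ ∈ Λ (ω σ) ∩ P, (1 / 2 : ℝ) * ‖σ‖ ^ 2 ≤ (1 / 2 : ℝ) * ‖τ‖ ^ 2) := by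
  classical
  -- pick v₀ with L v₀ ≠ 0
  obtain ⟨v₀, hv₀⟩ : ∃ v, L v ≠ 0 := by
    by_contra h
    push_neg at h
    exact hL (LinearMap.ext fun v => by simp [h v])
  obtain ⟨w, hw⟩ : ∃ w : H, w = (L v₀)⁻¹ • B v₀ := ⟨_, rfl⟩
  -- basic facts about Λ
  have hΛmem : ∀ ζ (τ : H), τ ∈ Λ ζ ↔ ∀ v : V, ⟪τ, B v⟫_ℝ = ζ * L v := by
    intro ζ τ; rw [hΛ]; rfl
  have hwζ : ∀ ζ (τ : H), τ ∈ Λ ζ → ⟪τ, w⟫_ℝ = ζ := by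
    intro ζ τ hτ
    rw [hw, real_inner_smul_right, (hΛmem ζ τ).1 hτ v₀]
    field_simp
  have hζuniq : ∀ {ζ₁ ζ₂ : ℝ} {τ : H}, τ ∈ Λ ζ₁ → τ ∈ Λ ζ₂ → ζ₁ = ζ₂ := by
    intro ζ₁ ζ₂ τ h1 h2
    rw [← hwζ ζ₁ τ h1, hwζ ζ₂ τ h2]
  have hΛconv : ∀ ζ, Convex ℝ (Λ ζ) := by
    intro ζ
    intro x hx y hy a b ha hb hab
    rw [hΛmem] at hx hy ⊢
    intro v
    rw [inner_add_left, real_inner_smul_left, real_inner_smul_left, hx v, hy v]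
    linear_combination (ζ * L v) * hab
  have hΛclosed : ∀ ζ, IsClosed (Λ ζ) := by
    intro ζ
    rw [hΛ]
    have : {τ : H | ∀ v : V, (inner ℝ τ (B v) : ℝ) = ζ * L v} =
        ⋂ v : V, {τ : H | (inner ℝ τ (B v) : ℝ) = ζ * L v} := by
      ext τ; simp
    rw [this]
    exact isClosed_iInter fun v =>
      isClosed_eq (continuous_id.inner continuous_const) continuous_const
  -- membership in Λt
  have hΛtmem : ∀ ζ (τ : H), 0 ≤ ζ → τ ∈ Λ ζ → τ ∈ Λt := by
    intro ζ τ hζ hτ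
    rw [hΛt]
    exact Set.mem_iUnion₂.2 ⟨ζ, hζ, hτ⟩
  -- ω agrees with inner product with w on Λt
  have hωinner : ∀ τ ∈ Λt, ω τ = ⟪τ, w⟫_ℝ := by
    intro τ hτ
    exact (hwζ (ω τ) τ (hω τ hτ).2).symm
  -- explicit description of Λt
  have hΛteq : Λt = {τ : H | 0 ≤ ⟪τ, w⟫_ℝ ∧ ∀ v : V, ⟪τ, B v⟫_ℝ = ⟪τ, w⟫_ℝ * L v} := by
    ext τ
    constructor
    · intro hτ
      rw [hΛt] at hτ
      obtain ⟨ζ, hζ, hτζ⟩ := Set.mem_iUnion₂.1 hτ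
      have hwτ := hwζ ζ τ hτζ
      exact ⟨hwτ ▸ hζ, fun v => by rw [hwτ]; exact (hΛmem ζ τ).1 hτζ v⟩
    · rintro ⟨h0, hall⟩
      exact hΛtmem _ τ h0 ((hΛmem _ τ).2 hall)
  have hΛtclosed : IsClosed Λt := by
    rw [hΛteq]
    have : {τ : H | 0 ≤ ⟪τ, w⟫_ℝ ∧ ∀ v : V, ⟪τ, B v⟫_ℝ = ⟪τ, w⟫_ℝ * L v} =
        {τ : H | 0 ≤ ⟪τ, w⟫_ℝ} ∩ ⋂ v : V, {τ : H | ⟪τ, B v⟫_ℝ = ⟪τ, w⟫_ℝ * L v} := by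
      ext τ; simp [Set.mem_iInter]
    rw [this]
    refine IsClosed.inter ?_ (isClosed_iInter fun v => ?_)
    · exact isClosed_le continuous_const (continuous_id.inner continuous_const)
    · exact isClosed_eq (continuous_id.inner continuous_const)
        (((continuous_id.inner continuous_const)).mul continuous_const)
  have hΛtconv : Convex ℝ Λt := by
    rw [hΛteq]
    intro x hx y hy a b ha hb hab
    obtain ⟨hx0, hxv⟩ := hx
    obtain ⟨hy0, hyv⟩ := hy
    constructor
    · rw [inner_add_left, real_inner_smul_left, real_inner_smul_left]
      positivity
    · intro v
      rw [inner_add_left, real_inner_smul_left, real_inner_smul_left, hxv v, hyv v,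
        inner_add_left, real_inner_smul_left, real_inner_smul_left]
      ring
  set K : Set H := Λt ∩ P with hK
  have hKclosed : IsClosed K := hΛtclosed.inter hPclosed
  have hKconv : Convex ℝ K := hΛtconv.inter hPconv
  have h0Λ : (0 : H) ∈ Λ 0 := (hΛmem 0 0).2 fun v => by simp
  have hKne : K.Nonempty := ⟨0, hΛtmem 0 0 le_rfl h0Λ, hP0⟩
  obtain ⟨u, hu⟩ : ∃ u : H, u = α • w := ⟨_, rfl⟩
  -- J identity
  have hJ : ∀ τ ∈ Λt, (1/2 : ℝ) * ‖τ‖ ^ 2 - α * ω τ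
      = (1/2 : ℝ) * ‖τ - u‖ ^ 2 - (1/2 : ℝ) * ‖u‖ ^ 2 := by
    intro τ hτ
    have h1 : α * ω τ = ⟪τ, u⟫_ℝ := by
      rw [hωinner τ hτ, hu, real_inner_smul_right]
    rw [h1]
    exact my_quad_id u τ
  -- existence of minimizer
  obtain ⟨σ₀, hσ₀K, hσ₀min⟩ := my_proj_exists K hKne hKclosed hKconv u
  have hσ₀J : ∀ τ ∈ Λt ∩ P,
      (1/2 : ℝ) * ‖σ₀‖ ^ 2 - α * ω σ₀ ≤ (1/2 : ℝ) * ‖τ‖ ^ 2 - α * ω τ := by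
    intro τ hτ
    rw [hJ σ₀ hσ₀K.1, hJ τ hτ.1]
    have h1 : ‖σ₀ - u‖ ≤ ‖τ - u‖ := by
      have := hσ₀min τ hτ
      rwa [norm_sub_rev u σ₀, norm_sub_rev u τ] at this
    nlinarith [norm_nonneg (σ₀ - u), norm_nonneg (τ - u)]
  -- any J-minimizer is a distance minimizer
  have hJtoDist : ∀ σ ∈ Λt ∩ P,
      (∀ τ ∈ Λt ∩ P,
        (1/2 : ℝ) * ‖σ‖ ^ 2 - α * ω σ ≤ (1/2 : ℝ) * ‖τ‖ ^ 2 - α * ω τ) →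
      ∀ x ∈ K, ‖u - σ‖ ≤ ‖u - x‖ := by
    intro σ hσ hmin x hx
    have := hmin x hx
    rw [hJ σ hσ.1, hJ x hx.1] at this
    have h2 : ‖σ - u‖ ^ 2 ≤ ‖x - u‖ ^ 2 := by linarith
    rw [norm_sub_rev σ u, norm_sub_rev x u] at h2
    nlinarith [norm_nonneg (u - σ), norm_nonneg (u - x)]
  -- part 2 preliminaries: attainment of φ
  have hφattain : ∀ t ∈ D, ∃ τ ∈ Λ t ∩ P,
      φ t = (1/2 : ℝ) * ‖τ‖ ^ 2 ∧ ∀ x ∈ Λ t ∩ P, ‖τ‖ ≤ ‖x‖ := by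
    intro t ht
    rw [hD] at ht
    obtain ⟨ht0, htne⟩ := ht
    obtain ⟨τ, hτ, hτmin⟩ := my_proj_exists (Λ t ∩ P) htne
      ((hΛclosed t).inter hPclosed) ((hΛconv t).inter hPconv) 0
    have hτmin' : ∀ x ∈ Λ t ∩ P, ‖τ‖ ≤ ‖x‖ := by
      intro x hx
      have := hτmin x hx
      rwa [zero_sub, zero_sub, norm_neg, norm_neg] at this
    refine ⟨τ, hτ, ?_, hτmin'⟩
    rw [hφ t]
    apply le_antisymm
    · exact csInf_le ⟨0, by rintro y ⟨x, _, rfl⟩; positivity⟩ ⟨τ, hτ, rfl⟩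
    · refine le_csInf ⟨_, ⟨τ, hτ, rfl⟩⟩ ?_
      rintro y ⟨x, hx, rfl⟩
      have := hτmin' x hx
      nlinarith [norm_nonneg τ, norm_nonneg x]
  have hφle : ∀ t (τ : H), τ ∈ Λ t ∩ P → φ t ≤ (1/2 : ℝ) * ‖τ‖ ^ 2 := by
    intro t τ hτ
    rw [hφ t]
    exact csInf_le ⟨0, by rintro y ⟨x, _, rfl⟩; positivity⟩ ⟨τ, hτ, rfl⟩
  refine ⟨⟨σ₀, ⟨hσ₀K, hσ₀J⟩, ?_⟩, ?_⟩
  · -- uniqueness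
    rintro σ' ⟨hσ'K, hσ'J⟩
    exact my_proj_unique hKconv hσ'K hσ₀K (hJtoDist σ' hσ'K hσ'J) (hJtoDist σ₀ hσ₀K hσ₀J)
  · -- part 2
    rintro σ hσ hmin
    obtain ⟨hωσ0, hσΛω⟩ := hω σ hσ.1
    have hconstrained : ∀ τ ∈ Λ (ω σ) ∩ P,
        (1/2 : ℝ) * ‖σ‖ ^ 2 ≤ (1/2 : ℝ) * ‖τ‖ ^ 2 := by
      rintro τ ⟨hτΛ, hτP⟩
      have hτΛt : τ ∈ Λt := hΛtmem _ τ hωσ0 hτΛ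
      have hωτ : ω τ = ω σ := hζuniq (hω τ hτΛt).2 hτΛ
      have := hmin τ ⟨hτΛt, hτP⟩
      rw [hωτ] at this
      linarith
    have hωσD : ω σ ∈ D := by
      rw [hD]; exact ⟨hωσ0, ⟨σ, hσΛω, hσ.2⟩⟩
    obtain ⟨hψD, hψmin⟩ := hψ α hα
    -- ω σ also minimizes t ↦ φ t - α t over D
    have hgmin : ∀ t ∈ D, φ (ω σ) - α * ω σ ≤ φ t - α * t := by
      intro t ht
      have ht0 : 0 ≤ t := by rw [hD] at ht; exact ht.1
      obtain ⟨τt, hτt, hφt, _⟩ := hφattain t ht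
      have hτtΛt : τt ∈ Λt := hΛtmem t τt ht0 hτt.1
      have hωτt : ω τt = t := hζuniq (hω τt hτtΛt).2 hτt.1
      have h1 : φ (ω σ) ≤ (1/2 : ℝ) * ‖σ‖ ^ 2 := hφle _ σ ⟨hσΛω, hσ.2⟩
      have h2 := hmin τt ⟨hτtΛt, hτt.2⟩
      rw [hωτt] at h2
      linarith [hφt ▸ h2]
    have hψeq : ψ α = ω σ := by
      by_contra hne
      obtain ⟨τ₁, hτ₁, hφ₁, _⟩ := hφattain (ψ α) hψD
      obtain ⟨τ₂, hτ₂, hφ₂, _⟩ := hφattain (ω σ) hωσD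
      have hτne : τ₁ ≠ τ₂ := by
        intro h
        exact hne (hζuniq (h ▸ hτ₁.1) hτ₂.1)
      have ht₁0 : 0 ≤ ψ α := by rw [hD] at hψD; exact hψD.1
      obtain ⟨m, hm⟩ : ∃ m : ℝ, m = (1/2 : ℝ) * ψ α + (1/2 : ℝ) * ω σ := ⟨_, rfl⟩
      obtain ⟨τm, hτm⟩ : ∃ τm : H, τm = (1/2 : ℝ) • τ₁ + (1/2 : ℝ) • τ₂ := ⟨_, rfl⟩
      have hτmΛ : τm ∈ Λ m := by
        rw [hΛmem]
        intro v
        rw [hτm, inner_add_left, real_inner_smul_left, real_inner_smul_left,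
          (hΛmem _ τ₁).1 hτ₁.1 v, (hΛmem _ τ₂).1 hτ₂.1 v, hm]
        ring
      have hτmP : τm ∈ P := by
        rw [hτm]
        exact hPconv hτ₁.2 hτ₂.2 (by norm_num) (by norm_num) (by norm_num)
      have hmD : m ∈ D := by
        rw [hD]
        constructor
        · rw [hm]; positivity
        · exact ⟨τm, hτmΛ, hτmP⟩
      -- parallelogram
      have hpar := parallelogram_law_with_norm ℝ τ₁ τ₂
      have hτmnorm : ‖τm‖ = (1/2 : ℝ) * ‖τ₁ + τ₂‖ := by
        rw [hτm, ← smul_add, norm_smul]; simp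
      have hφm : φ m ≤ (1/2 : ℝ) * ‖τm‖ ^ 2 := hφle m τm ⟨hτmΛ, hτmP⟩
      have hg1 : φ (ψ α) - α * ψ α ≤ φ m - α * m := hψmin m hmD
      have hg2 : φ (ψ α) - α * ψ α = φ (ω σ) - α * ω σ :=
        le_antisymm (hψmin _ hωσD) (hgmin _ hψD)
      have hτnepos : 0 < ‖τ₁ - τ₂‖ ^ 2 := pow_pos (norm_sub_pos_iff.2 hτne) 2
      have h5 : ‖τm‖ ^ 2 = (1/4 : ℝ) * ‖τ₁ + τ₂‖ ^ 2 := by rw [hτmnorm]; ring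
      have hpar2 : ‖τ₁ + τ₂‖ ^ 2 + ‖τ₁ - τ₂‖ ^ 2 = 2 * (‖τ₁‖ ^ 2 + ‖τ₂‖ ^ 2) := by
        simp only [pow_two]; linarith [hpar]
      have ham : α * m = (1/2 : ℝ) * (α * ψ α) + (1/2 : ℝ) * (α * ω σ) := by
        rw [hm]; ring
      have hA : φ m - α * m ≤ (1/4 : ℝ) * ‖τ₁‖ ^ 2 + (1/4 : ℝ) * ‖τ₂‖ ^ 2
          - (1/8 : ℝ) * ‖τ₁ - τ₂‖ ^ 2 - (1/2 : ℝ) * (α * ψ α) - (1/2 : ℝ) * (α * ω σ) := by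
        linarith
      linarith
    exact ⟨hψeq, hconstrained⟩
end
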